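/- Weak* convergence of oscillating data: let u : ℝ^N → ℝ be bounded and Lebesgue measurable and suppose there is a constant c such that sup_{a ∈ ℝ^N} |(1/|B_r(a)|) ∫_{B_r(a)} u(y) dy − c| → 0 as r → ∞. Then for every f ∈ L¹(ℝ^N), ∫_{ℝ^N} u(x/ε) f(x) dx → c ∫_{ℝ^N} f(x) dx as ε → 0⁺. -/

import Mathlib

open MeasureTheory Filter Metric Set

section WeakStarAux

variable {N : ℕ}

local notation "E'" => EuclideanSpace ℝ (Fin N)

private lemma avg_scale' (u : EuclideanSpace ℝ (Fin N) → ℝ) {ε δ : ℝ} (hε : 0 < ε) (hδ : 0 < δ)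
    (x : EuclideanSpace ℝ (Fin N)) :
    (volume (ball x δ)).toReal⁻¹ * ∫ y in ball x δ, u (ε⁻¹ • y) =
      (volume (ball (ε⁻¹ • x) (ε⁻¹ * δ))).toReal⁻¹ *
        ∫ y in ball (ε⁻¹ • x) (ε⁻¹ * δ), u y := by
  have hεinv : (0:ℝ) < ε⁻¹ := inv_pos.2 hε
  have hmem : ∀ y : E', ε⁻¹ • y ∈ ball (ε⁻¹ • x) (ε⁻¹ * δ) ↔ y ∈ ball x δ := by
    intro y
    simp only [mem_ball, dist_smul₀, Real.norm_eq_abs, abs_of_pos hεinv]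
    exact mul_lt_mul_iff_right₀ hεinv
  have h1 : ∫ y in ball x δ, u (ε⁻¹ • y) =
      ∫ y, (ball (ε⁻¹ • x) (ε⁻¹ * δ)).indicator u (ε⁻¹ • y) := by
    rw [← integral_indicator measurableSet_ball]
    congr 1
    ext y
    by_cases hy : y ∈ ball x δ
    · rw [Set.indicator_of_mem hy, Set.indicator_of_mem ((hmem y).2 hy)]
    · rw [Set.indicator_of_notMem hy, Set.indicator_of_notMem (fun h => hy ((hmem y).1 h))]
  have h2 : ∫ y, (ball (ε⁻¹ • x) (ε⁻¹ * δ)).indicator u (ε⁻¹ • y) =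
      ε ^ N • ∫ y, (ball (ε⁻¹ • x) (ε⁻¹ * δ)).indicator u y := by
    simpa [finrank_euclideanSpace_fin] using
      Measure.integral_comp_inv_smul_of_nonneg (volume : Measure E')
        ((ball (ε⁻¹ • x) (ε⁻¹ * δ)).indicator u) hε.le
  have hv : volume (ball (ε⁻¹ • x) (ε⁻¹ * δ)) =
      ENNReal.ofReal (ε⁻¹ ^ N) * volume (ball (0:E') δ) := by
    simpa [finrank_euclideanSpace_fin] using
      Measure.addHaar_ball_mul_of_pos (volume : Measure E') (ε⁻¹ • x) hεinv δ
  have hvc : volume (ball x δ) = volume (ball (0:E') δ) :=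
    Measure.addHaar_ball_center _ _ _
  have hvpos : 0 < (volume (ball (0:E') δ)).toReal :=
    ENNReal.toReal_pos (measure_ball_pos _ _ hδ).ne' measure_ball_lt_top.ne
  rw [h1, h2, integral_indicator measurableSet_ball, hv, hvc]
  rw [ENNReal.toReal_mul, ENNReal.toReal_ofReal (by positivity)]
  rw [smul_eq_mul, inv_pow, mul_inv, inv_inv]
  ring

private lemma sset_meas' {δ : ℝ} : MeasurableSet {p : E' × E' | dist p.1 p.2 < δ} :=
  (isOpen_lt continuous_dist continuous_const).measurableSet

private lemma sect_right' {δ : ℝ} (F : E' → ℝ) (x : E') :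
    (fun y => ({p : E' × E' | dist p.1 p.2 < δ}).indicator (fun p => F p.2) (x, y)) =
      (ball x δ).indicator F := by
  ext y
  by_cases hy : y ∈ ball x δ
  · rw [Set.indicator_of_mem hy, Set.indicator_of_mem]
    simpa [dist_comm] using hy
  · rw [Set.indicator_of_notMem hy, Set.indicator_of_notMem]
    simpa [dist_comm] using hy

/-- measurability of the ball average of a bounded measurable function -/
private lemma meas_ball_int' {δ : ℝ} (U : E' → ℝ) (hU : Measurable U) :
    StronglyMeasurable (fun x : E' => ∫ y in ball x δ, U y) := by
  have hk : StronglyMeasurable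
      (fun p : E' × E' => ({p : E' × E' | dist p.1 p.2 < δ}).indicator (fun p => U p.2) p) :=
    ((hU.comp measurable_snd).indicator sset_meas').stronglyMeasurable
  have := hk.integral_prod_right' (ν := (volume : Measure E'))
  convert this using 1
  funext x
  rw [← integral_indicator measurableSet_ball, ← sect_right' U x]

/-- integrability of the mollification of an integrable function -/
private lemma int_ball_int' {δ : ℝ} (g : E' → ℝ) (hg : Integrable g) (hgm : Measurable g) :
    Integrable (fun x : E' => ∫ y in ball x δ, g y) := by
  have hkm : Measurable
      (fun p : E' × E' => ({p : E' × E' | dist p.1 p.2 < δ}).indicator (fun p => g p.2) p) :=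
    (hgm.comp measurable_snd).indicator sset_meas'
  have hk_int : Integrable
      (fun p : E' × E' => ({p : E' × E' | dist p.1 p.2 < δ}).indicator (fun p => g p.2) p)
      ((volume : Measure E').prod volume) := by
    rw [integrable_prod_iff' hkm.aestronglyMeasurable]
    constructor
    · refine Eventually.of_forall fun y => ?_
      have h1 : (fun x => ({p : E' × E' | dist p.1 p.2 < δ}).indicator
          (fun p => g p.2) (x, y)) = (ball y δ).indicator (fun _ => g y) := by
        ext x
        by_cases hx : x ∈ ball y δ
        · rw [Set.indicator_of_mem hx, Set.indicator_of_mem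
            (show ((x, y) : E' × E') ∈ {p : E' × E' | dist p.1 p.2 < δ} by simpa using hx)]
        · rw [Set.indicator_of_notMem hx, Set.indicator_of_notMem
            (show ((x, y) : E' × E') ∉ {p : E' × E' | dist p.1 p.2 < δ} by simpa using hx)]
      rw [h1]
      exact (integrable_indicator_iff measurableSet_ball).2
        (integrableOn_const measure_ball_lt_top.ne)
    · have h2 : (fun y : E' => ∫ x, ‖({p : E' × E' | dist p.1 p.2 < δ}).indicator
          (fun p => g p.2) (x, y)‖) = fun y => (volume (ball (0:E') δ)).toReal * ‖g y‖ := by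
        funext y
        have h1 : (fun x => ‖({p : E' × E' | dist p.1 p.2 < δ}).indicator
            (fun p => g p.2) (x, y)‖) = (ball y δ).indicator (fun _ => ‖g y‖) := by
          ext x
          by_cases hx : x ∈ ball y δ
          · rw [Set.indicator_of_mem hx, Set.indicator_of_mem
              (show ((x, y) : E' × E') ∈ {p : E' × E' | dist p.1 p.2 < δ} by simpa using hx)]
          · rw [Set.indicator_of_notMem hx, Set.indicator_of_notMem
              (show ((x, y) : E' × E') ∉ {p : E' × E' | dist p.1 p.2 < δ} by simpa using hx)]
            simp
        rw [h1, integral_indicator measurableSet_ball, setIntegral_const, smul_eq_mul, measureReal_def,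
          Measure.addHaar_ball_center]
      rw [h2]
      exact hg.norm.const_mul _
  have h3 := hk_int.integral_prod_left
  refine h3.congr (Eventually.of_forall fun x => ?_)
  show (∫ y, ({p : E' × E' | dist p.1 p.2 < δ}).indicator (fun p => g p.2) (x, y)) = _
  rw [sect_right' g x, integral_indicator measurableSet_ball]

private lemma fubini_moll' {δ : ℝ} (g U : E' → ℝ) (hg : Integrable g) (hgm : Measurable g)
    (hU : Measurable U) {C : ℝ} (hUb : ∀ y, |U y| ≤ C) :
    ∫ x, g x * (∫ y in ball x δ, U y) = ∫ y, (∫ x in ball y δ, g x) * U y := by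
  set k : E' × E' → ℝ :=
    fun p => ({p : E' × E' | dist p.1 p.2 < δ}).indicator (fun p => g p.1 * U p.2) p with hk
  have hkm : Measurable k :=
    ((hgm.comp measurable_fst).mul (hU.comp measurable_snd)).indicator sset_meas'
  have hsecR : ∀ x : E', (fun y => k (x, y)) = (ball x δ).indicator (fun y => g x * U y) := by
    intro x; funext y
    by_cases hy : dist y x < δ <;>
      simp [k, Set.indicator_apply, Set.mem_setOf_eq, mem_ball, dist_comm x y, hy]
  have hsecL : ∀ y : E', (fun x => k (x, y)) = (ball y δ).indicator (fun x => g x * U y) := by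
    intro y; funext x
    by_cases hx : dist x y < δ <;>
      simp [k, Set.indicator_apply, Set.mem_setOf_eq, mem_ball, hx]
  have hC0 : 0 ≤ C := le_trans (abs_nonneg _) (hUb 0)
  have hk_int : Integrable k ((volume : Measure E').prod volume) := by
    rw [integrable_prod_iff hkm.aestronglyMeasurable]
    constructor
    · refine Eventually.of_forall fun x => ?_
      rw [hsecR x]
      refine (integrable_indicator_iff measurableSet_ball).2 ?_
      refine Measure.integrableOn_of_bounded (M := |g x| * C) measure_ball_lt_top.ne
        ((hU.aestronglyMeasurable).const_mul (g x)) ?_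
      refine Eventually.of_forall fun y => ?_
      rw [Real.norm_eq_abs, abs_mul]
      exact mul_le_mul_of_nonneg_left (hUb y) (abs_nonneg _)
    · refine Integrable.mono' ((hg.norm.mul_const C).mul_const
        (volume (ball (0:E') δ)).toReal)
        (hkm.norm.stronglyMeasurable.integral_prod_right').aestronglyMeasurable
        (Eventually.of_forall fun x => ?_)
      have h1 : (fun y => ‖k (x, y)‖) = (ball x δ).indicator (fun y => ‖g x * U y‖) := by
        funext y
        by_cases hy : dist y x < δ <;>
          simp [k, Set.indicator_apply, Set.mem_setOf_eq, mem_ball, dist_comm x y, hy]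
      have h2 : ‖∫ y, ‖k (x, y)‖‖ ≤ (|g x| * C) * (volume (ball x δ)).toReal := by
        rw [h1, integral_indicator measurableSet_ball]
        refine norm_setIntegral_le_of_norm_le_const measure_ball_lt_top
          fun y _ => ?_
        rw [norm_norm, Real.norm_eq_abs, abs_mul]
        exact mul_le_mul_of_nonneg_left (hUb y) (abs_nonneg _)
      calc ‖∫ y, ‖k (x, y)‖‖ ≤ (|g x| * C) * (volume (ball x δ)).toReal := h2
        _ = ‖g x‖ * C * (volume (ball (0:E') δ)).toReal := by
            rw [Measure.addHaar_ball_center, Real.norm_eq_abs]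
  have hswap : (∫ x, ∫ y, k (x, y)) = ∫ y, ∫ x, k (x, y) :=
    integral_integral_swap hk_int
  calc ∫ x, g x * (∫ y in ball x δ, U y)
      = ∫ x, ∫ y, k (x, y) := by
        refine integral_congr_ae (Eventually.of_forall fun x => ?_)
        dsimp only
        rw [hsecR x, integral_indicator measurableSet_ball, integral_const_mul]
    _ = ∫ y, ∫ x, k (x, y) := hswap
    _ = ∫ y, (∫ x in ball y δ, g x) * U y := by
        refine integral_congr_ae (Eventually.of_forall fun y => ?_)
        dsimp only
        rw [hsecL y, integral_indicator measurableSet_ball, integral_mul_const]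

end WeakStarAux

/-- weak* convergence of oscillating data.  If `u : ℝ^N → ℝ` is bounded
and measurable, and its ball averages converge to a constant `c` as the radius tends
to `∞`, uniformly in the center, then `∫ u(x/ε) f(x) dx → c ∫ f(x) dx` as `ε → 0⁺`
for every integrable `f`. -/
theorem weak_star_convergence_oscillating_data {N : ℕ} (hN : 0 < N)
    (u : EuclideanSpace ℝ (Fin N) → ℝ) (hmeas : Measurable u)
    (hbdd : ∃ C : ℝ, ∀ y, |u y| ≤ C) (c : ℝ)
    (havg : ∀ ε > (0 : ℝ), ∃ R : ℝ, ∀ r ≥ R, ∀ a : EuclideanSpace ℝ (Fin N),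
      |(volume (Metric.ball a r)).toReal⁻¹ * (∫ y in Metric.ball a r, u y) - c| < ε)
    (f : EuclideanSpace ℝ (Fin N) → ℝ) (hf : Integrable f) :
    Tendsto (fun ε : ℝ => ∫ x, u (ε⁻¹ • x) * f x)
      (nhdsWithin 0 (Set.Ioi 0)) (nhds (c * ∫ x, f x)) := by
  classical
  obtain ⟨C₀, hC₀⟩ := hbdd
  set C : ℝ := max C₀ 1 with hCdef
  have hC : ∀ y, |u y| ≤ C := fun y => le_trans (hC₀ y) (le_max_left _ _)
  have hC1 : (1:ℝ) ≤ C := le_max_right _ _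
  have hCpos : (0:ℝ) < C := lt_of_lt_of_le one_pos hC1
  rw [Metric.tendsto_nhdsWithin_nhds]
  intro η hη
  -- Step 1: continuous compactly supported approximation of f
  have hη₁ : (0:ℝ) < η / (4 * (C + |c| + 1)) := by positivity
  obtain ⟨g, g_supp, hfg, g_cont, g_int⟩ := hf.exists_hasCompactSupport_integral_sub_le hη₁
  have hgm : Measurable g := g_cont.measurable
  -- Step 2: uniform continuity scale
  set K : Set (EuclideanSpace ℝ (Fin N)) := Metric.cthickening 1 (tsupport g) with hKdef
  have hKcomp : IsCompact K := g_supp.cthickening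
  set VK : ℝ := (volume K).toReal with hVKdef
  have hVK0 : 0 ≤ VK := ENNReal.toReal_nonneg
  set τ : ℝ := η / (8 * C * (VK + 1)) with hτdef
  have hτpos : 0 < τ := by positivity
  have hguc : UniformContinuous g :=
    g_cont.uniformContinuous_of_tendsto_cocompact g_supp.is_zero_at_infty
  obtain ⟨δ₀, hδ₀pos, hδ₀⟩ := Metric.uniformContinuous_iff.1 hguc τ hτpos
  set δ : ℝ := min δ₀ 1 with hδdef
  have hδpos : 0 < δ := lt_min hδ₀pos one_pos
  have hδle1 : δ ≤ 1 := min_le_right _ _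
  have hδleδ₀ : δ ≤ δ₀ := min_le_left _ _
  -- Step 3: radius from the averaging hypothesis
  set η' : ℝ := η / (8 * ((∫ x, ‖g x‖) + 1)) with hη'def
  have hgnorm0 : 0 ≤ ∫ x, ‖g x‖ := integral_nonneg fun x => norm_nonneg _
  have hη'pos : 0 < η' := by positivity
  obtain ⟨R, hR⟩ := havg η' hη'pos
  set R' : ℝ := max R 1 with hR'def
  have hR'pos : (0:ℝ) < R' := lt_of_lt_of_le one_pos (le_max_right _ _)
  refine ⟨δ / R', by positivity, ?_⟩
  intro ε hε hεd
  have hεpos : (0:ℝ) < ε := hε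
  rw [Real.dist_eq, sub_zero, abs_of_pos hεpos] at hεd
  have hrad : R ≤ ε⁻¹ * δ := by
    have h1 : ε * R' < δ := (lt_div_iff₀ hR'pos).1 hεd
    have h2 : ε⁻¹ * (ε * R') < ε⁻¹ * δ :=
      mul_lt_mul_of_pos_left h1 (inv_pos.2 hεpos)
    have h3 : ε⁻¹ * (ε * R') = R' := by field_simp
    calc R ≤ R' := le_max_left _ _
      _ = ε⁻¹ * (ε * R') := h3.symm
      _ ≤ ε⁻¹ * δ := h2.le
  -- main objects
  set U : EuclideanSpace ℝ (Fin N) → ℝ := fun y => u (ε⁻¹ • y) with hUdef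
  have hU : Measurable U := hmeas.comp (measurable_const_smul ε⁻¹)
  have hUb : ∀ y, |U y| ≤ C := fun y => hC _
  set Vδ : ℝ := (volume (ball (0:EuclideanSpace ℝ (Fin N)) δ)).toReal with hVδdef
  have hVδpos : 0 < Vδ :=
    ENNReal.toReal_pos (measure_ball_pos _ _ hδpos).ne' measure_ball_lt_top.ne
  have hball : ∀ x : EuclideanSpace ℝ (Fin N),
      volume (ball x δ) = volume (ball (0:EuclideanSpace ℝ (Fin N)) δ) :=
    fun x => Measure.addHaar_ball_center _ _ _
  set I : EuclideanSpace ℝ (Fin N) → ℝ := fun x => ∫ y in ball x δ, U y with hIdef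
  have hIm : StronglyMeasurable I := meas_ball_int' U hU
  have hIb : ∀ x, |I x| ≤ C * Vδ := by
    intro x
    have := norm_setIntegral_le_of_norm_le_const (f := U) (s := ball x δ) (C := C)
      (measure_ball_lt_top (μ := volume) (x := x) (r := δ)) (fun y _ => by
        rw [Real.norm_eq_abs]; exact hUb y)
    rw [Real.norm_eq_abs] at this
    calc |I x| ≤ C * (volume (ball x δ)).toReal := this
      _ = C * Vδ := by rw [hball x]
  set G : EuclideanSpace ℝ (Fin N) → ℝ := fun x => Vδ⁻¹ * I x with hGdef
  have hGm : Measurable G := (measurable_const.mul hIm.measurable)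
  have hGb : ∀ x, |G x| ≤ C := by
    intro x
    rw [hGdef]
    calc |Vδ⁻¹ * I x| = Vδ⁻¹ * |I x| := by
          rw [abs_mul, abs_of_pos (inv_pos.2 hVδpos)]
      _ ≤ Vδ⁻¹ * (C * Vδ) := mul_le_mul_of_nonneg_left (hIb x) (inv_pos.2 hVδpos).le
      _ = C := by field_simp
  have hGc : ∀ x, |G x - c| ≤ η' := by
    intro x
    have h := hR (ε⁻¹ * δ) hrad (ε⁻¹ • x)
    have heq : G x = (volume (ball (ε⁻¹ • x) (ε⁻¹ * δ))).toReal⁻¹ *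
        ∫ y in ball (ε⁻¹ • x) (ε⁻¹ * δ), u y := by
      rw [← avg_scale' u hεpos hδpos x, hGdef, hIdef, hball x, hVδdef]
    rw [heq]
    exact h.le
  -- mollification of g
  set J : EuclideanSpace ℝ (Fin N) → ℝ := fun x => ∫ y in ball x δ, g y with hJdef
  have hJint : Integrable J := int_ball_int' g g_int hgm
  set gδ : EuclideanSpace ℝ (Fin N) → ℝ := fun x => Vδ⁻¹ * J x with hgδdef
  have hgδint : Integrable gδ := hJint.const_mul _
  -- pointwise estimate on g - gδ
  have claim2 : ∀ x, |g x - gδ x| ≤ τ * K.indicator (fun _ => (1:ℝ)) x := by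
    intro x
    by_cases hx : x ∈ K
    · rw [Set.indicator_of_mem hx]
      have hsub : g x - gδ x = Vδ⁻¹ * ∫ y in ball x δ, (g x - g y) := by
        have hint : (∫ y in ball x δ, (g x - g y)) = Vδ * g x - J x := by
          rw [integral_sub (integrableOn_const (C := g x) measure_ball_lt_top.ne enorm_ne_top)
            g_int.integrableOn, setIntegral_const, smul_eq_mul, measureReal_def, hball x]
        rw [hint, hgδdef]
        dsimp only
        field_simp
      have hbound : |∫ y in ball x δ, (g x - g y)| ≤ τ * Vδ := by
        have := norm_setIntegral_le_of_norm_le_const (f := fun y => g x - g y)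
          (s := ball x δ) (C := τ) (measure_ball_lt_top (μ := volume) (x := x) (r := δ))
          (fun y hy => by
            rw [Real.norm_eq_abs, ← Real.dist_eq]
            exact (hδ₀ (lt_of_lt_of_le (by simpa [dist_comm] using hy) hδleδ₀)).le)
        rw [Real.norm_eq_abs] at this
        calc |∫ y in ball x δ, (g x - g y)| ≤ τ * (volume (ball x δ)).toReal := this
          _ = τ * Vδ := by rw [hball x]
      calc |g x - gδ x| = Vδ⁻¹ * |∫ y in ball x δ, (g x - g y)| := by
            rw [hsub, abs_mul, abs_of_pos (inv_pos.2 hVδpos)]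
        _ ≤ Vδ⁻¹ * (τ * Vδ) := mul_le_mul_of_nonneg_left hbound (inv_pos.2 hVδpos).le
        _ = τ := by field_simp
        _ = τ * 1 := (mul_one τ).symm
    · rw [Set.indicator_of_notMem hx, mul_zero]
      have hgx : g x = 0 :=
        image_eq_zero_of_notMem_tsupport (fun h => hx (self_subset_cthickening _ h))
      have hJx : J x = 0 := by
        rw [hJdef]
        refine setIntegral_eq_zero_of_forall_eq_zero fun y hy => ?_
        by_contra hgy
        have hyk : y ∈ tsupport g := subset_tsupport g hgy
        have : x ∈ K := by
          rw [hKdef]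
          refine mem_cthickening_of_dist_le x y 1 _ hyk ?_
          calc dist x y = dist y x := dist_comm _ _
            _ ≤ δ := (mem_ball.1 hy).le
            _ ≤ 1 := hδle1
        exact hx this
      rw [hgx, hgδdef]
      dsimp only
      rw [hJx, mul_zero, sub_zero, abs_zero]
  -- integrabilities
  have hUf : Integrable (fun x => U x * f x) :=
    hf.bdd_mul hU.aestronglyMeasurable (Eventually.of_forall fun x => by rw [Real.norm_eq_abs]; exact hUb x)
  have hUg : Integrable (fun x => U x * g x) :=
    g_int.bdd_mul hU.aestronglyMeasurable (Eventually.of_forall fun x => by rw [Real.norm_eq_abs]; exact hUb x)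
  have hUgδ : Integrable (fun x => U x * gδ x) :=
    hgδint.bdd_mul hU.aestronglyMeasurable (Eventually.of_forall fun x => by rw [Real.norm_eq_abs]; exact hUb x)
  have hgG : Integrable (fun x => g x * G x) := by
    have := g_int.bdd_mul hGm.aestronglyMeasurable
      (Eventually.of_forall fun x => by rw [Real.norm_eq_abs]; exact hGb x)
    simpa [mul_comm] using this
  -- Fubini identity
  have hid : ∫ x, U x * gδ x = ∫ x, g x * G x := by
    have hfub := fubini_moll' (δ := δ) g U g_int hgm hU hUb
    calc ∫ x, U x * gδ x = ∫ x, Vδ⁻¹ * (J x * U x) := by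
          refine integral_congr_ae (Eventually.of_forall fun x => ?_)
          rw [hgδdef]; dsimp only; ring
      _ = Vδ⁻¹ * ∫ x, J x * U x := integral_const_mul _ _
      _ = Vδ⁻¹ * ∫ x, g x * I x := by rw [show (∫ x, J x * U x) = ∫ x, g x * I x from hfub.symm]
      _ = ∫ x, Vδ⁻¹ * (g x * I x) := (integral_const_mul _ _).symm
      _ = ∫ x, g x * G x := by
          refine integral_congr_ae (Eventually.of_forall fun x => ?_)
          rw [hGdef]; dsimp only; ring
  -- the four estimates
  set n1 : ℝ := ∫ x, ‖f x - g x‖ with hn1def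
  have hn10 : 0 ≤ n1 := integral_nonneg fun x => norm_nonneg _
  have e1 : |(∫ x, U x * f x) - ∫ x, U x * g x| ≤ C * n1 := by
    rw [← integral_sub hUf hUg, ← Real.norm_eq_abs]
    calc ‖∫ x, (U x * f x - U x * g x)‖ ≤ ∫ x, ‖U x * f x - U x * g x‖ :=
          norm_integral_le_integral_norm _
      _ ≤ ∫ x, C * ‖f x - g x‖ := by
          refine integral_mono_of_nonneg (Eventually.of_forall fun x => norm_nonneg _)
            ((hf.sub g_int).norm.const_mul C) (Eventually.of_forall fun x => ?_)
          dsimp only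
          rw [show U x * f x - U x * g x = U x * (f x - g x) by ring, norm_mul,
            Real.norm_eq_abs (U x)]
          exact mul_le_mul_of_nonneg_right (hUb x) (norm_nonneg _)
      _ = C * n1 := integral_const_mul _ _
  have hindint : Integrable (K.indicator (fun _ => (1:ℝ))) :=
    (integrable_indicator_iff hKcomp.measurableSet).2
      (integrableOn_const hKcomp.measure_lt_top.ne)
  have hindval : ∫ x, K.indicator (fun _ => (1:ℝ)) x = VK := by
    rw [integral_indicator_const (1:ℝ) hKcomp.measurableSet, smul_eq_mul, mul_one, measureReal_def, hVKdef]
  have key2 : ∫ x, ‖g x - gδ x‖ ≤ τ * VK := by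
    calc ∫ x, ‖g x - gδ x‖ ≤ ∫ x, τ * K.indicator (fun _ => (1:ℝ)) x := by
          refine integral_mono_of_nonneg (Eventually.of_forall fun x => norm_nonneg _)
            (hindint.const_mul τ) (Eventually.of_forall fun x => ?_)
          dsimp only
          rw [Real.norm_eq_abs]
          exact claim2 x
      _ = τ * VK := by rw [integral_const_mul, hindval]
  have e2 : |(∫ x, U x * g x) - ∫ x, U x * gδ x| ≤ C * (τ * VK) := by
    rw [← integral_sub hUg hUgδ, ← Real.norm_eq_abs]
    calc ‖∫ x, (U x * g x - U x * gδ x)‖ ≤ ∫ x, ‖U x * g x - U x * gδ x‖ :=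
          norm_integral_le_integral_norm _
      _ ≤ ∫ x, C * ‖g x - gδ x‖ := by
          refine integral_mono_of_nonneg (Eventually.of_forall fun x => norm_nonneg _)
            ((g_int.sub hgδint).norm.const_mul C) (Eventually.of_forall fun x => ?_)
          dsimp only
          rw [show U x * g x - U x * gδ x = U x * (g x - gδ x) by ring, norm_mul,
            Real.norm_eq_abs (U x)]
          exact mul_le_mul_of_nonneg_right (hUb x) (norm_nonneg _)
      _ = C * ∫ x, ‖g x - gδ x‖ := integral_const_mul _ _
      _ ≤ C * (τ * VK) := mul_le_mul_of_nonneg_left key2 hCpos.le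
  have e3 : |(∫ x, g x * G x) - c * ∫ x, g x| ≤ (∫ x, ‖g x‖) * η' := by
    have hgc : Integrable (fun x => g x * c) := g_int.mul_const c
    have hcg : c * ∫ x, g x = ∫ x, g x * c := by
      rw [integral_mul_const]; ring
    rw [hcg, ← integral_sub hgG hgc, ← Real.norm_eq_abs]
    calc ‖∫ x, (g x * G x - g x * c)‖ ≤ ∫ x, ‖g x * G x - g x * c‖ :=
          norm_integral_le_integral_norm _
      _ ≤ ∫ x, ‖g x‖ * η' := by
          refine integral_mono_of_nonneg (Eventually.of_forall fun x => norm_nonneg _)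
            (g_int.norm.mul_const η') (Eventually.of_forall fun x => ?_)
          dsimp only
          rw [show g x * G x - g x * c = g x * (G x - c) by ring, norm_mul,
            Real.norm_eq_abs (G x - c)]
          exact mul_le_mul_of_nonneg_left (hGc x) (norm_nonneg _)
      _ = (∫ x, ‖g x‖) * η' := integral_mul_const _ _
  have e4 : |c * (∫ x, g x) - c * ∫ x, f x| ≤ |c| * n1 := by
    rw [← mul_sub, abs_mul]
    refine mul_le_mul_of_nonneg_left ?_ (abs_nonneg c)
    rw [← integral_sub g_int hf, ← Real.norm_eq_abs]
    calc ‖∫ x, (g x - f x)‖ ≤ ∫ x, ‖g x - f x‖ := norm_integral_le_integral_norm _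
      _ = n1 := by
          rw [hn1def]
          exact integral_congr_ae (Eventually.of_forall fun x => norm_sub_rev _ _)
  -- assemble
  rw [Real.dist_eq]
  show |(∫ x, U x * f x) - c * ∫ x, f x| < η
  have htotal : |(∫ x, U x * f x) - c * ∫ x, f x| ≤
      C * n1 + C * (τ * VK) + (∫ x, ‖g x‖) * η' + |c| * n1 := by
    have t1 : |(∫ x, U x * f x) - c * ∫ x, f x| ≤
        |(∫ x, U x * f x) - ∫ x, U x * g x| + |(∫ x, U x * g x) - c * ∫ x, f x| :=
      abs_sub_le _ _ _
    have t2 : |(∫ x, U x * g x) - c * ∫ x, f x| ≤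
        |(∫ x, U x * g x) - ∫ x, U x * gδ x| + |(∫ x, U x * gδ x) - c * ∫ x, f x| :=
      abs_sub_le _ _ _
    have t3 : |(∫ x, U x * gδ x) - c * ∫ x, f x| ≤
        |(∫ x, U x * gδ x) - c * ∫ x, g x| + |c * (∫ x, g x) - c * ∫ x, f x| :=
      abs_sub_le _ _ _
    have t4 : |(∫ x, U x * gδ x) - c * ∫ x, g x| = |(∫ x, g x * G x) - c * ∫ x, g x| := by
      rw [hid]
    linarith [e1, e2, e3, e4]
  have b1 : C * n1 + |c| * n1 ≤ η / 4 := by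
    have h1 : (C + |c|) * n1 ≤ (C + |c|) * (η / (4 * (C + |c| + 1))) :=
      mul_le_mul_of_nonneg_left hfg (by positivity)
    have h2 : (C + |c|) * (η / (4 * (C + |c| + 1))) ≤
        (C + |c| + 1) * (η / (4 * (C + |c| + 1))) :=
      mul_le_mul_of_nonneg_right (by linarith) hη₁.le
    have h3 : (C + |c| + 1) * (η / (4 * (C + |c| + 1))) = η / 4 := by
      have : C + |c| + 1 ≠ 0 := by positivity
      field_simp
    linarith [h1, h2, h3]
  have b2 : C * (τ * VK) ≤ η / 8 := by
    have h1 : C * (τ * VK) = τ * (C * VK) := by ring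
    have h2 : τ * (C * VK) ≤ τ * (C * (VK + 1)) :=
      mul_le_mul_of_nonneg_left
        (mul_le_mul_of_nonneg_left (by linarith) hCpos.le) hτpos.le
    have h3 : τ * (C * (VK + 1)) = η / 8 := by
      rw [hτdef]
      have hne : (8:ℝ) * C * (VK + 1) ≠ 0 := by positivity
      field_simp
    linarith
  have b3 : (∫ x, ‖g x‖) * η' ≤ η / 8 := by
    have h2 : (∫ x, ‖g x‖) * η' ≤ ((∫ x, ‖g x‖) + 1) * η' :=
      mul_le_mul_of_nonneg_right (by linarith) hη'pos.le
    have h3 : ((∫ x, ‖g x‖) + 1) * η' = η / 8 := by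
      rw [hη'def]
      have hne : ((∫ x, ‖g x‖) + 1) ≠ 0 := by positivity
      field_simp
    linarith
  linarith
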